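/- A bijective non-degenerate solution (X,r) is decomposable if and only if there exists an epimorphism of solutions f : (X,r) → ({0,1}, τ), where τ is the flip map τ(x,y) = (y,x). -/

import Mathlib

open Function

section Defs

variable {X Y : Type*}

/-- `r₁₂ = r × id` on `X³`. -/
def r12 (r : X × X → X × X) : X × X × X → X × X × X :=
  fun p => ((r (p.1, p.2.1)).1, (r (p.1, p.2.1)).2, p.2.2)

/-- `r₂₃ = id × r` on `X³`. -/
def r23 (r : X × X → X × X) : X × X × X → X × X × X :=
  fun p => (p.1, r p.2)

/-- The Yang--Baxter (braid) equation. -/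
def IsYB (r : X × X → X × X) : Prop :=
  (r12 r) ∘ (r23 r) ∘ (r12 r) = (r23 r) ∘ (r12 r) ∘ (r23 r)

/-- The solution map `r(x,y) = (λ_x(y), ρ_y(x))` built from `λ` and `ρ`. -/
def rMap (lam : X → Equiv.Perm X) (rho : X → X → X) : X × X → X × X :=
  fun p => (lam p.1 p.2, rho p.2 p.1)

/-- `(X, r)` with `r(x,y) = (λ_x(y), ρ_y(x))` is a bijective non-degenerate
set-theoretic solution of the Yang--Baxter equation. -/
def IsSolution (lam : X → Equiv.Perm X) (rho : X → X → X) : Prop :=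
  IsYB (rMap lam rho) ∧ Bijective (rMap lam rho) ∧ ∀ y, Bijective (rho y)

/-- The (left) derived operation `σ_y(x) = x ◁ y = λ_y(ρ_{λ_x⁻¹(y)}(x))`. -/
def sigMap (lam : X → Equiv.Perm X) (rho : X → X → X) (y : X) : X → X :=
  fun x => lam y (rho ((lam x).symm y) x)

/-- A biquandle: a solution whose derived rack is a quandle. -/
def IsBiquandle (lam : X → Equiv.Perm X) (rho : X → X → X) : Prop :=
  IsSolution lam rho ∧ ∀ x, sigMap lam rho x x = x

/-- The diagonal map `q(x) = λ_x⁻¹(x)`. -/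
def qMap (lam : X → Equiv.Perm X) : X → X := fun x => (lam x).symm x

/-- `λ` of the `k`-th additive multiple: `λ_{kx}` restricted to `X`,
computed via `kx = x ∘ q(x) ∘ ⋯ ∘ q^{k-1}(x)` and `λ_{a∘b} = λ_a λ_b`. -/
def lamCab (lam : X → Equiv.Perm X) : ℕ → X → Equiv.Perm X
  | 0, _ => 1
  | k+1, x => lam x * lamCab lam k (qMap lam x)

/-- `σ` of the `k`-th additive multiple: `σ_{ky} = σ_y^k` restricted to `X`. -/
def sigCab (lam : X → Equiv.Perm X) (rho : X → X → X) (k : ℕ) (y : X) : X → X :=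
  (sigMap lam rho y)^[k]

/-- `ρ` of the `k`-cabled solution, via `ρ_b(a) = λ_{λ_a(b)}⁻¹ σ_{λ_a(b)}(a)`. -/
def rhoCab (lam : X → Equiv.Perm X) (rho : X → X → X) (k : ℕ) (y x : X) : X :=
  (lamCab lam k (lamCab lam k x y)).symm (sigCab lam rho k (lamCab lam k x y) x)

/-- The `k`-cabled solution `r^{(k)}`. -/
def rCab (lam : X → Equiv.Perm X) (rho : X → X → X) (k : ℕ) : X × X → X × X :=
  rMap (lamCab lam k) (rhoCab lam rho k)

/-- `f` is a morphism of solutions `(X,r) → (Y,s)`. -/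
def IsMor (r : X × X → X × X) (s : Y × Y → Y × Y) (f : X → Y) : Prop :=
  ∀ p, Prod.map f f (r p) = s (Prod.map f f p)

/-- `(X,r)` is `n`-decomposable: a partition into `n` nonempty subsolutions
`X_1, …, X_n` with `r(X_i × X_j) = X_j × X_i`. -/
def NDecomp (r : X × X → X × X) (n : ℕ) : Prop :=
  ∃ P : Fin n → Set X, (∀ i, (P i).Nonempty) ∧
    (∀ i j, i ≠ j → Disjoint (P i) (P j)) ∧ (⋃ i, P i) = Set.univ ∧
    ∀ i j, r '' ((P i) ×ˢ (P j)) = (P j) ×ˢ (P i)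

/-- `(X,r)` is decomposable: a partition `X = Y ⊔ Z` into nonempty parts with
`r(Y×Y) ⊆ Y×Y` and `r(Z×Z) ⊆ Z×Z`. -/
def Decomposable (r : X × X → X × X) : Prop :=
  ∃ A B : Set X, A.Nonempty ∧ B.Nonempty ∧ Disjoint A B ∧ A ∪ B = Set.univ ∧
    r '' (A ×ˢ A) ⊆ A ×ˢ A ∧ r '' (B ×ˢ B) ⊆ B ×ˢ B

/-- A solution is simple if every epimorphic image is isomorphic to it or a singleton. -/
def SimpleSol {X : Type u} (r : X × X → X × X) : Prop :=
  ∀ (Z : Type u) (s : Z × Z → Z × Z) (f : X → Z),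
    Surjective f → IsMor r s f → Bijective f ∨ Subsingleton Z

/-- The image in `Perm X` of the group `S(X,r) = ⟨σ_x⁻¹ : x ∈ X⟩ ⋊ 𝒢(X,r)`
acting on `X` via `(σ_a⁻¹, λ_b, ρ_b⁻¹) · x = σ_a⁻¹ λ_b (x)`:
the subgroup of `Perm X` generated by all `σ_x` and `λ_x`. -/
def permGroupOf (lam : X → Equiv.Perm X) (rho : X → X → X) : Subgroup (Equiv.Perm X) :=
  Subgroup.closure {g : Equiv.Perm X | (∃ y, ⇑g = sigMap lam rho y) ∨ ∃ y, g = lam y}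

/-- Relations `x ∘ y = l(x,y) ∘ ρ(y,x)` defining a structure group. -/
def relsOf (l ρ : X → X → X) : Set (FreeGroup X) :=
  {w | ∃ x y : X, w = FreeGroup.of x * FreeGroup.of y *
      (FreeGroup.of (l x y) * FreeGroup.of (ρ y x))⁻¹}

end Defs

lemma mem_iff_of_mapsTo {X : Type*} [Finite X] {g : X → X} (hg : Function.Injective g)
    {S : Set X} (h : Set.MapsTo g S S) (x : X) : g x ∈ S ↔ x ∈ S := by
  have himg : g '' S = S :=
    Set.eq_of_subset_of_ncard_le (h.image_subset)
      (le_of_eq (Set.ncard_image_of_injective _ hg).symm)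
  constructor
  · intro hx
    rw [← himg] at hx
    obtain ⟨y, hy, hxy⟩ := hx
    rwa [← hg hxy]
  · exact fun hx => h hx

/-- `(X,r)` is decomposable iff there is an epimorphism of solutions
onto the flip solution on two elements. -/
theorem decomposable_iff_epi_to_flip {X : Type*} [Finite X]
    (lam : X → Equiv.Perm X) (rho : X → X → X)
    (hsol : IsSolution lam rho) :
    Decomposable (rMap lam rho) ↔
      ∃ f : X → Fin 2, Function.Surjective f ∧
        IsMor (rMap lam rho) (fun p : Fin 2 × Fin 2 => (p.2, p.1)) f := by
  classical
  obtain ⟨_, hbij, hrho⟩ := hsol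
  constructor
  · rintro ⟨A, B, ⟨a0, ha0⟩, ⟨b0, hb0⟩, hdisj, huniv, hA, hB⟩
    have hAB : ∀ x, x ∈ A ↔ x ∉ B := by
      intro x
      constructor
      · exact fun hx => Set.disjoint_left.1 hdisj hx
      · intro hx
        have h : x ∈ A ∪ B := huniv ▸ Set.mem_univ x
        rcases h with h | h
        · exact h
        · exact absurd h hx
    have hlamA : ∀ x ∈ A, Set.MapsTo (lam x) A A := fun x hx y hy =>
      (hA ⟨(x, y), ⟨hx, hy⟩, rfl⟩).1
    have hlamB : ∀ x ∈ B, Set.MapsTo (lam x) B B := fun x hx y hy =>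
      (hB ⟨(x, y), ⟨hx, hy⟩, rfl⟩).1
    have hrhoA : ∀ y ∈ A, Set.MapsTo (fun x => rho y x) A A := fun y hy x hx =>
      (hA ⟨(x, y), ⟨hx, hy⟩, rfl⟩).2
    have hrhoB : ∀ y ∈ B, Set.MapsTo (fun x => rho y x) B B := fun y hy x hx =>
      (hB ⟨(x, y), ⟨hx, hy⟩, rfl⟩).2
    have klam : ∀ x y, (lam x y ∈ A ↔ y ∈ A) := by
      intro x y
      by_cases hx : x ∈ A
      · exact mem_iff_of_mapsTo (lam x).injective (hlamA x hx) y
      · have hx' : x ∈ B := by rw [hAB] at hx; tauto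
        have h2 := mem_iff_of_mapsTo (lam x).injective (hlamB x hx') y
        rw [hAB (lam x y), hAB y]
        tauto
    have krho : ∀ y x, (rho y x ∈ A ↔ x ∈ A) := by
      intro y x
      by_cases hy : y ∈ A
      · exact mem_iff_of_mapsTo (hrho y).1 (hrhoA y hy) x
      · have hy' : y ∈ B := by rw [hAB] at hy; tauto
        have h2 := mem_iff_of_mapsTo (hrho y).1 (hrhoB y hy') x
        rw [hAB (rho y x), hAB x]
        tauto
    refine ⟨fun x => if x ∈ A then (0 : Fin 2) else 1, ?_, ?_⟩
    · intro i
      fin_cases i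
      · exact ⟨a0, if_pos ha0⟩
      · exact ⟨b0, if_neg (fun h => Set.disjoint_left.1 hdisj h hb0)⟩
    · rintro ⟨x, y⟩
      show ((if lam x y ∈ A then (0 : Fin 2) else 1), (if rho y x ∈ A then (0 : Fin 2) else 1))
          = ((if y ∈ A then (0 : Fin 2) else 1), (if x ∈ A then (0 : Fin 2) else 1))
      rw [if_congr (klam x y) rfl rfl, if_congr (krho y x) rfl rfl]
  · rintro ⟨f, hf, hmor⟩
    have key : ∀ x y, f (lam x y) = f y ∧ f (rho y x) = f x := by
      intro x y
      have := hmor (x, y)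
      simp only [rMap, Prod.map] at this
      exact ⟨congrArg Prod.fst this, congrArg Prod.snd this⟩
    obtain ⟨a0, ha0⟩ := hf 0
    obtain ⟨b0, hb0⟩ := hf 1
    refine ⟨f ⁻¹' {0}, f ⁻¹' {1}, ⟨a0, ha0⟩, ⟨b0, hb0⟩, ?_, ?_, ?_, ?_⟩
    · rw [Set.disjoint_left]
      intro x hx hx'
      simp only [Set.mem_preimage, Set.mem_singleton_iff] at hx hx'
      rw [hx] at hx'
      exact absurd hx' (by decide)
    · ext x
      simp only [Set.mem_union, Set.mem_preimage, Set.mem_singleton_iff, Set.mem_univ, iff_true]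
      omega
    · rintro ⟨u, v⟩ ⟨⟨x, y⟩, ⟨hx, hy⟩, heq⟩
      obtain ⟨h1, h2⟩ := key x y
      simp only [rMap] at heq
      obtain ⟨rfl, rfl⟩ := Prod.mk.injEq .. ▸ heq
      exact ⟨by simp_all, by simp_all⟩
    · rintro ⟨u, v⟩ ⟨⟨x, y⟩, ⟨hx, hy⟩, heq⟩
      obtain ⟨h1, h2⟩ := key x y
      simp only [rMap] at heq
      obtain ⟨rfl, rfl⟩ := Prod.mk.injEq .. ▸ heq
      exact ⟨by simp_all, by simp_all⟩
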